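/- Let (A, ∘) be an anti-pre-Lie algebra and r ∈ A⊗A such that (L_∘(x)⊗I - I⊗ad(x))(r+τ(r)) = 0 for all x ∈ A. Then r satisfies the anti-pre-Lie Yang–Baxter equation S(r) = r₁₂∘r₁₃ + r₁₂∘r₂₃ - [r₁₃, r₂₃] = 0 if and only if τ(r) satisfies it, i.e., S(τ(r)) = r₂₁∘r₃₁ + r₂₁∘r₃₂ + [r₃₂, r₃₁] = 0. -/

import Mathlib

open scoped TensorProduct

/-- An anti-pre-Lie algebra structure on a vector space `A`. -/
def IsAntiPreLie {k A : Type*} [Field k] [AddCommGroup A] [Module k A]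
    (c : A →ₗ[k] A →ₗ[k] A) : Prop :=
  (∀ x y z, c x (c y z) - c y (c x z) = c (c y x - c x y) z) ∧
  (∀ x y z, c (c x y - c y x) z + c (c y z - c z y) x + c (c z x - c x z) y = 0)

/-- for `r = ∑ i, a i ⊗ b i` in an anti-pre-Lie algebra with
`(L_∘(x)⊗I - I⊗ad(x))(r + τ(r)) = 0` for all `x`, `r` satisfies the anti-pre-Lie
Yang–Baxter equation `S(r) = 0` iff `τ(r)` does, i.e. `S(τ(r)) = 0` (the same
expression with the family `(a, b)` replaced by `(b, a)`). -/
theorem aplYBE_tau_iff {k A ι : Type*} [Field k] [AddCommGroup A] [Module k A]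
    [Fintype ι] (c : A →ₗ[k] A →ₗ[k] A) (h : IsAntiPreLie c) (a b : ι → A)
    (hinv : ∀ x : A,
      (∑ i, ((c x (a i)) ⊗ₜ[k] b i - a i ⊗ₜ[k] (c x (b i) - c (b i) x) +
        (c x (b i)) ⊗ₜ[k] a i - b i ⊗ₜ[k] (c x (a i) - c (a i) x))) = 0) :
    ((∑ i, ∑ j, a i ⊗ₜ[k] (c (b i) (a j)) ⊗ₜ[k] b j) +
      (∑ i, ∑ j, (c (a i) (a j)) ⊗ₜ[k] b i ⊗ₜ[k] b j) -
      (∑ i, ∑ j, a i ⊗ₜ[k] a j ⊗ₜ[k] (c (b i) (b j) - c (b j) (b i))) = 0)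
    ↔ ((∑ i, ∑ j, b i ⊗ₜ[k] (c (a i) (b j)) ⊗ₜ[k] a j) +
      (∑ i, ∑ j, (c (b i) (b j)) ⊗ₜ[k] a i ⊗ₜ[k] a j) -
      (∑ i, ∑ j, b i ⊗ₜ[k] b j ⊗ₜ[k] (c (a i) (a j) - c (a j) (a i))) = 0) := by
  clear h
  -- the four images of the invariance identity inside `A ⊗ (A ⊗ A)`
  -- E1 : (hinv (a j)) with `b j` appended in the third slot
  have E1 : ∀ j : ι, (∑ i, ((c (a j) (a i)) ⊗ₜ[k] (b i ⊗ₜ[k] b j)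
      - a i ⊗ₜ[k] ((c (a j) (b i) - c (b i) (a j)) ⊗ₜ[k] b j)
      + (c (a j) (b i)) ⊗ₜ[k] (a i ⊗ₜ[k] b j)
      - b i ⊗ₜ[k] ((c (a j) (a i) - c (a i) (a j)) ⊗ₜ[k] b j))) = 0 := by
    intro j
    have h0 := congrArg (LinearMap.lTensor A ((TensorProduct.mk k A A).flip (b j))) (hinv (a j))
    simpa [map_sum, TensorProduct.mk_apply, TensorProduct.tmul_sub, TensorProduct.sub_tmul,
      TensorProduct.tmul_add, TensorProduct.add_tmul, TensorProduct.tmul_sum,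
      Finset.sum_sub_distrib, Finset.sum_add_distrib] using h0
  -- E2 : comm applied to (hinv (a j)), then `b j` appended in the third slot
  have E2 : ∀ j : ι, (∑ i, (b i ⊗ₜ[k] ((c (a j) (a i)) ⊗ₜ[k] b j)
      - (c (a j) (b i) - c (b i) (a j)) ⊗ₜ[k] (a i ⊗ₜ[k] b j)
      + a i ⊗ₜ[k] ((c (a j) (b i)) ⊗ₜ[k] b j)
      - (c (a j) (a i) - c (a i) (a j)) ⊗ₜ[k] (b i ⊗ₜ[k] b j))) = 0 := by
    intro j
    have h0 := congrArg ((LinearMap.lTensor A ((TensorProduct.mk k A A).flip (b j))).comp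
      (TensorProduct.comm k A A).toLinearMap) (hinv (a j))
    simpa [map_sum, TensorProduct.mk_apply, TensorProduct.tmul_sub, TensorProduct.sub_tmul,
      TensorProduct.tmul_add, TensorProduct.add_tmul, TensorProduct.tmul_sum,
      Finset.sum_sub_distrib, Finset.sum_add_distrib] using h0
  -- E3 : `b j` prepended in the first slot to (hinv (a j))
  have E3 : ∀ j : ι, (∑ i, (b j ⊗ₜ[k] ((c (a j) (a i)) ⊗ₜ[k] b i)
      - b j ⊗ₜ[k] (a i ⊗ₜ[k] (c (a j) (b i) - c (b i) (a j)))
      + b j ⊗ₜ[k] ((c (a j) (b i)) ⊗ₜ[k] a i)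
      - b j ⊗ₜ[k] (b i ⊗ₜ[k] (c (a j) (a i) - c (a i) (a j))))) = 0 := by
    intro j
    have h0 := congrArg ((TensorProduct.mk k A (A ⊗[k] A)) (b j)) (hinv (a j))
    simpa [map_sum, TensorProduct.mk_apply, TensorProduct.tmul_sub, TensorProduct.sub_tmul,
      TensorProduct.tmul_add, TensorProduct.add_tmul, TensorProduct.tmul_sum,
      Finset.sum_sub_distrib, Finset.sum_add_distrib] using h0
  -- E4 : (hinv (b j)) with `a j` inserted in the middle slot
  have E4 : ∀ j : ι, (∑ i, ((c (b j) (a i)) ⊗ₜ[k] (a j ⊗ₜ[k] b i)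
      - a i ⊗ₜ[k] (a j ⊗ₜ[k] (c (b j) (b i) - c (b i) (b j)))
      + (c (b j) (b i)) ⊗ₜ[k] (a j ⊗ₜ[k] a i)
      - b i ⊗ₜ[k] (a j ⊗ₜ[k] (c (b j) (a i) - c (a i) (b j))))) = 0 := by
    intro j
    have h0 := congrArg (LinearMap.lTensor A ((TensorProduct.mk k A A) (a j))) (hinv (b j))
    simpa [map_sum, TensorProduct.mk_apply, TensorProduct.tmul_sub, TensorProduct.sub_tmul,
      TensorProduct.tmul_add, TensorProduct.add_tmul, TensorProduct.tmul_sum,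
      Finset.sum_sub_distrib, Finset.sum_add_distrib] using h0
  -- the antisymmetric remainder
  set F : ι → ι → A ⊗[k] (A ⊗[k] A) := fun i j =>
    b i ⊗ₜ[k] (a j ⊗ₜ[k] (c (a i) (b j)))
    - b i ⊗ₜ[k] (a j ⊗ₜ[k] (c (b j) (a i)))
    + b i ⊗ₜ[k] (b j ⊗ₜ[k] (c (a i) (a j)))
    - b i ⊗ₜ[k] (b j ⊗ₜ[k] (c (a j) (a i)))
    - b i ⊗ₜ[k] ((c (a i) (a j)) ⊗ₜ[k] b j)
    - b i ⊗ₜ[k] ((c (a i) (b j)) ⊗ₜ[k] a j)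
    - (c (b i) (a j)) ⊗ₜ[k] (a i ⊗ₜ[k] b j)
    - (c (b i) (b j)) ⊗ₜ[k] (a i ⊗ₜ[k] a j) with hF
  have EE1 : (∑ i, ∑ j, ((c (a j) (a i)) ⊗ₜ[k] (b i ⊗ₜ[k] b j)
      - a i ⊗ₜ[k] ((c (a j) (b i) - c (b i) (a j)) ⊗ₜ[k] b j)
      + (c (a j) (b i)) ⊗ₜ[k] (a i ⊗ₜ[k] b j)
      - b i ⊗ₜ[k] ((c (a j) (a i) - c (a i) (a j)) ⊗ₜ[k] b j))) = 0 := by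
    rw [Finset.sum_comm]; exact Finset.sum_eq_zero fun j _ => E1 j
  have EE2 : (∑ i, ∑ j, (b i ⊗ₜ[k] ((c (a j) (a i)) ⊗ₜ[k] b j)
      - (c (a j) (b i) - c (b i) (a j)) ⊗ₜ[k] (a i ⊗ₜ[k] b j)
      + a i ⊗ₜ[k] ((c (a j) (b i)) ⊗ₜ[k] b j)
      - (c (a j) (a i) - c (a i) (a j)) ⊗ₜ[k] (b i ⊗ₜ[k] b j))) = 0 := by
    rw [Finset.sum_comm]; exact Finset.sum_eq_zero fun j _ => E2 j
  have EE3 : (∑ i, ∑ j, (b j ⊗ₜ[k] ((c (a j) (a i)) ⊗ₜ[k] b i)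
      - b j ⊗ₜ[k] (a i ⊗ₜ[k] (c (a j) (b i) - c (b i) (a j)))
      + b j ⊗ₜ[k] ((c (a j) (b i)) ⊗ₜ[k] a i)
      - b j ⊗ₜ[k] (b i ⊗ₜ[k] (c (a j) (a i) - c (a i) (a j))))) = 0 := by
    rw [Finset.sum_comm]; exact Finset.sum_eq_zero fun j _ => E3 j
  have EE4 : (∑ i, ∑ j, ((c (b j) (a i)) ⊗ₜ[k] (a j ⊗ₜ[k] b i)
      - a i ⊗ₜ[k] (a j ⊗ₜ[k] (c (b j) (b i) - c (b i) (b j)))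
      + (c (b j) (b i)) ⊗ₜ[k] (a j ⊗ₜ[k] a i)
      - b i ⊗ₜ[k] (a j ⊗ₜ[k] (c (b j) (a i) - c (a i) (b j))))) = 0 := by
    rw [Finset.sum_comm]; exact Finset.sum_eq_zero fun j _ => E4 j
  have SW : (∑ i, ∑ j, F i j) = (∑ i, ∑ j, F j i) := Finset.sum_comm
  have key : ((∑ i, ∑ j, a i ⊗ₜ[k] (c (b i) (a j)) ⊗ₜ[k] b j) +
      (∑ i, ∑ j, (c (a i) (a j)) ⊗ₜ[k] b i ⊗ₜ[k] b j) -
      (∑ i, ∑ j, a i ⊗ₜ[k] a j ⊗ₜ[k] (c (b i) (b j) - c (b j) (b i))))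
      = ((∑ i, ∑ j, b i ⊗ₜ[k] (c (a i) (b j)) ⊗ₜ[k] a j) +
      (∑ i, ∑ j, (c (b i) (b j)) ⊗ₜ[k] a i ⊗ₜ[k] a j) -
      (∑ i, ∑ j, b i ⊗ₜ[k] b j ⊗ₜ[k] (c (a i) (a j) - c (a j) (a i)))) := by
    rw [← sub_eq_zero]
    apply (TensorProduct.assoc k A A A).injective
    have expand : TensorProduct.assoc k A A A (((∑ i, ∑ j, a i ⊗ₜ[k] (c (b i) (a j)) ⊗ₜ[k] b j) +
        (∑ i, ∑ j, (c (a i) (a j)) ⊗ₜ[k] b i ⊗ₜ[k] b j) -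
        (∑ i, ∑ j, a i ⊗ₜ[k] a j ⊗ₜ[k] (c (b i) (b j) - c (b j) (b i))))
        - ((∑ i, ∑ j, b i ⊗ₜ[k] (c (a i) (b j)) ⊗ₜ[k] a j) +
        (∑ i, ∑ j, (c (b i) (b j)) ⊗ₜ[k] a i ⊗ₜ[k] a j) -
        (∑ i, ∑ j, b i ⊗ₜ[k] b j ⊗ₜ[k] (c (a i) (a j) - c (a j) (a i)))))
        = (∑ i, ∑ j, ((c (a j) (a i)) ⊗ₜ[k] (b i ⊗ₜ[k] b j)
            - a i ⊗ₜ[k] ((c (a j) (b i) - c (b i) (a j)) ⊗ₜ[k] b j)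
            + (c (a j) (b i)) ⊗ₜ[k] (a i ⊗ₜ[k] b j)
            - b i ⊗ₜ[k] ((c (a j) (a i) - c (a i) (a j)) ⊗ₜ[k] b j)))
          + (∑ i, ∑ j, (b i ⊗ₜ[k] ((c (a j) (a i)) ⊗ₜ[k] b j)
            - (c (a j) (b i) - c (b i) (a j)) ⊗ₜ[k] (a i ⊗ₜ[k] b j)
            + a i ⊗ₜ[k] ((c (a j) (b i)) ⊗ₜ[k] b j)
            - (c (a j) (a i) - c (a i) (a j)) ⊗ₜ[k] (b i ⊗ₜ[k] b j)))
          - (∑ i, ∑ j, (b j ⊗ₜ[k] ((c (a j) (a i)) ⊗ₜ[k] b i)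
            - b j ⊗ₜ[k] (a i ⊗ₜ[k] (c (a j) (b i) - c (b i) (a j)))
            + b j ⊗ₜ[k] ((c (a j) (b i)) ⊗ₜ[k] a i)
            - b j ⊗ₜ[k] (b i ⊗ₜ[k] (c (a j) (a i) - c (a i) (a j)))))
          - (∑ i, ∑ j, ((c (b j) (a i)) ⊗ₜ[k] (a j ⊗ₜ[k] b i)
            - a i ⊗ₜ[k] (a j ⊗ₜ[k] (c (b j) (b i) - c (b i) (b j)))
            + (c (b j) (b i)) ⊗ₜ[k] (a j ⊗ₜ[k] a i)
            - b i ⊗ₜ[k] (a j ⊗ₜ[k] (c (b j) (a i) - c (a i) (b j)))))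
          + ((∑ i, ∑ j, F i j) - (∑ i, ∑ j, F j i)) := by
      simp only [map_sub, map_add, map_sum, TensorProduct.assoc_tmul]
      simp only [← Finset.sum_add_distrib, ← Finset.sum_sub_distrib]
      refine Finset.sum_congr rfl fun i _ => Finset.sum_congr rfl fun j _ => ?_
      simp only [hF, TensorProduct.tmul_sub, TensorProduct.sub_tmul,
        TensorProduct.tmul_add, TensorProduct.add_tmul]
      abel
    rw [expand, EE1, EE2, EE3, EE4, SW, map_zero]
    abel
  rw [key]
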